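/- Let G be an edge-periodic graph on n vertices with global period LCM. Deciding whether G is cop-winning can be reduced to deciding reachability for the existential player in an AND-OR graph with at most 2·n²·LCM vertices; consequently, if the winning region of this AND-OR game is computable, cop-winning of G is decidable. -/
import Mathlib


namespace EPG

/-- Presence of the edge `{u,v}` at time `t`: the binary string `τ u v` (the empty
string encodes a non-edge) has a `1` at position `t mod |τ u v|`. -/
def present {V : Type*} (τ : V → V → List Bool) (u v : V) (t : ℕ) : Prop :=
  (τ u v).getD (t % (τ u v).length) false = true

/-- A legal move at time `t`: stay, or cross an edge present at time `t`. -/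
def moveOK {V : Type*} (τ : V → V → List Bool) (t : ℕ) (u v : V) : Prop :=
  v = u ∨ present τ u v t

/-- A (Markov) strategy: given the time and both current positions, produce the
mover's next vertex. -/
abbrev Strat (V : Type*) := ℕ → V → V → V

/-- A cop strategy is valid if it always prescribes legal moves. -/
def copValid {V : Type*} (τ : V → V → List Bool) (σ : Strat V) : Prop :=
  ∀ t u r, moveOK τ t u (σ t u r)

/-- A robber strategy is valid if it always prescribes legal moves. -/
def robValid {V : Type*} (τ : V → V → List Bool) (σ : Strat V) : Prop :=
  ∀ t c r, moveOK τ t r (σ t c r)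

/-- The pair of positions (cop, robber) at the beginning of round `t`, given start
vertices `c0, r0` and strategies `σc, σr`; in each round the cop moves first,
then the robber (seeing the cop's new position). -/
def pos {V : Type*} (σc σr : Strat V) (c0 r0 : V) : ℕ → V × V
  | 0 => (c0, r0)
  | t + 1 =>
      let p := pos σc σr c0 r0 t
      let c' := σc t p.1 p.2
      (c', σr t c' p.2)

/-- The cop catches the robber within the first `N` rounds: either the robber starts
on the cop's vertex, or in some round `t < N` the cop's move lands on the robber. -/
def caughtBy {V : Type*} (σc σr : Strat V) (c0 r0 : V) (N : ℕ) : Prop :=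
  c0 = r0 ∨ ∃ t < N,
    σc t (pos σc σr c0 r0 t).1 (pos σc σr c0 r0 t).2 = (pos σc σr c0 r0 t).2

/-- The cop eventually catches the robber. -/
def caught {V : Type*} (σc σr : Strat V) (c0 r0 : V) : Prop :=
  c0 = r0 ∨ ∃ t,
    σc t (pos σc σr c0 r0 t).1 (pos σc σr c0 r0 t).2 = (pos σc σr c0 r0 t).2

/-- The edge-periodic graph is cop-winning: the cop has a start vertex and a valid
strategy catching every robber. -/
def copWinning {V : Type*} (τ : V → V → List Bool) : Prop :=
  ∃ c0 σc, copValid τ σc ∧ ∀ r0 σr, robValid τ σr → caught σc σr c0 r0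

/-- The edge-periodic graph is robber-winning: against every cop start vertex and valid
cop strategy, the robber has a start vertex and valid strategy evading forever. -/
def robberWinning {V : Type*} (τ : V → V → List Bool) : Prop :=
  ∀ c0 σc, copValid τ σc → ∃ r0 σr, robValid τ σr ∧ ¬ caught σc σr c0 r0

/-- The least common multiple of the lengths of the edge strings. -/
def lcmLen {V : Type*} [Fintype V] [DecidableEq V] (τ : V → V → List Bool) : ℕ :=
  ((Finset.univ : Finset (V × V)).filter fun p => τ p.1 p.2 ≠ []).lcm
    fun p => (τ p.1 p.2).length

end EPG

namespace EPG

/-- Time advances by one, modulo the global period. -/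
def nextT {L : ℕ} (t : Fin L) : Fin L :=
  ⟨(t.val + 1) % L, Nat.mod_lt _ ((Nat.zero_le _).trans_lt t.isLt)⟩

/-- The attractor (winning region of the existential player) of the target set
`{(u_c, u_r, s, t) | u_c = u_r}` in the AND-OR configuration graph of the
cops-and-robber game: OR-nodes are cop-to-move configurations and AND-nodes
robber-to-move configurations; after the robber's move time advances modulo `L`. -/
inductive Attr {V : Type*} (τ : V → V → List Bool) {L : ℕ} :
    V × V × Bool × Fin L → Prop
  | capture (uc : V) (s : Bool) (t : Fin L) : Attr τ (uc, uc, s, t)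
  | copMove (uc uc' ur : V) (t : Fin L) : moveOK τ t.val uc uc' →
      Attr τ (uc', ur, false, t) → Attr τ (uc, ur, true, t)
  | robMove (uc ur : V) (t : Fin L) :
      (∀ ur', moveOK τ t.val ur ur' → Attr τ (uc, ur', true, nextT t)) →
      Attr τ (uc, ur, false, t)

end EPG


namespace EPG

section Aux
attribute [local instance] Classical.propDecidable

variable {V : Type*}

lemma present_mod [Fintype V] [DecidableEq V] (τ : V → V → List Bool) {L : ℕ}
    (hL : L = lcmLen τ) (u v : V) (t : ℕ) :
    present τ u v (t % L) ↔ present τ u v t := by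
  by_cases h : τ u v = []
  · simp [present, h]
  · have hdvd : (τ u v).length ∣ L := by
      rw [hL]
      have hmem : (u, v) ∈ (Finset.univ : Finset (V × V)).filter fun p => τ p.1 p.2 ≠ [] :=
        Finset.mem_filter.mpr ⟨Finset.mem_univ _, h⟩
      exact Finset.dvd_lcm hmem
    unfold present
    rw [Nat.mod_mod_of_dvd t hdvd]

lemma moveOK_mod [Fintype V] [DecidableEq V] (τ : V → V → List Bool) {L : ℕ}
    (hL : L = lcmLen τ) (u v : V) (t : ℕ) :
    moveOK τ (t % L) u v ↔ moveOK τ t u v := by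
  unfold moveOK
  rw [present_mod τ hL]

/-- Ranked attractor. -/
def AttrN (τ : V → V → List Bool) {L : ℕ} : ℕ → V × V × Bool × Fin L → Prop
  | 0 => fun x => x.1 = x.2.1
  | k+1 => fun x =>
      x.1 = x.2.1 ∨
      (x.2.2.1 = true ∧ ∃ c', moveOK τ x.2.2.2.val x.1 c' ∧
        AttrN τ k (c', x.2.1, false, x.2.2.2)) ∨
      (x.2.2.1 = false ∧ ∀ r', moveOK τ x.2.2.2.val x.2.1 r' →
        AttrN τ k (x.1, r', true, nextT x.2.2.2))

lemma attrN_succ (τ : V → V → List Bool) {L : ℕ} (k : ℕ) (c r : V) (s : Bool) (t : Fin L) :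
    AttrN τ (k+1) (c, r, s, t) ↔
      c = r ∨
      (s = true ∧ ∃ c', moveOK τ t.val c c' ∧ AttrN τ k (c', r, false, t)) ∨
      (s = false ∧ ∀ r', moveOK τ t.val r r' → AttrN τ k (c, r', true, nextT t)) :=
  Iff.rfl

lemma attrN_mono (τ : V → V → List Bool) {L : ℕ} :
    ∀ (k : ℕ) (x : V × V × Bool × Fin L), AttrN τ k x → AttrN τ (k+1) x := by
  intro k
  induction k with
  | zero => intro x h; exact Or.inl h
  | succ m ih =>
    rintro ⟨c, r, s, t⟩ h
    rcases h with h | ⟨hs, c', hm, ha⟩ | ⟨hs, ha⟩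
    · exact Or.inl h
    · exact Or.inr (Or.inl ⟨hs, c', hm, ih _ ha⟩)
    · exact Or.inr (Or.inr ⟨hs, fun r' hr => ih _ (ha r' hr)⟩)

lemma attrN_le (τ : V → V → List Bool) {L : ℕ} {k m : ℕ} (hkm : k ≤ m)
    {x : V × V × Bool × Fin L} (h : AttrN τ k x) : AttrN τ m x := by
  induction hkm with
  | refl => exact h
  | step h' ih => exact attrN_mono τ _ x ih

lemma attr_iff_attrN [Fintype V] (τ : V → V → List Bool) {L : ℕ}
    (x : V × V × Bool × Fin L) : Attr τ x ↔ ∃ k, AttrN τ k x := by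
  constructor
  · intro h
    induction h with
    | capture uc s t => exact ⟨0, rfl⟩
    | copMove uc uc' ur t hm _ ih =>
      obtain ⟨k, hk⟩ := ih
      exact ⟨k + 1, Or.inr (Or.inl ⟨rfl, uc', hm, hk⟩)⟩
    | robMove uc ur t _ ih =>
      have hch : ∀ r' : V, ∃ k, moveOK τ t.val ur r' → AttrN τ k (uc, r', true, nextT t) := by
        intro r'
        by_cases hm : moveOK τ t.val ur r'
        · obtain ⟨k, hk⟩ := ih r' hm
          exact ⟨k, fun _ => hk⟩
        · exact ⟨0, fun h => absurd h hm⟩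
      choose f hf using hch
      refine ⟨(Finset.univ.sup f) + 1, Or.inr (Or.inr ⟨rfl, fun r' hr => ?_⟩)⟩
      exact attrN_le τ (Finset.le_sup (Finset.mem_univ r')) (hf r' hr)
  · rintro ⟨k, hk⟩
    induction k generalizing x with
    | zero =>
      obtain ⟨c, r, s, t⟩ := x
      cases hk
      exact Attr.capture c s t
    | succ m ih =>
      obtain ⟨c, r, s, t⟩ := x
      rcases hk with h | ⟨hs, c', hm, ha⟩ | ⟨hs, ha⟩
      · cases h; exact Attr.capture c s t
      · subst hs; exact Attr.copMove c c' r t hm (ih _ ha)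
      · subst hs; exact Attr.robMove c r t fun r' hr => ih _ (ha r' hr)

/-- one cop step: at a cop node in the attractor with `c ≠ r`, there is a legal move
strictly decreasing the rank. -/
lemma cop_step (τ : V → V → List Bool) {L : ℕ} {c r : V} {t : Fin L} (hcr : c ≠ r)
    (h : ∃ k, AttrN τ k ((c, r, true, t) : V × V × Bool × Fin L)) :
    ∃ c', moveOK τ t.val c c' ∧
      ∃ h' : (∃ k, AttrN τ k ((c', r, false, t) : V × V × Bool × Fin L)),
        Nat.find h' < Nat.find h := by
  have hk := Nat.find_spec h
  rcases hn : Nat.find h with _ | m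
  · rw [hn] at hk; exact absurd hk hcr
  · rw [hn] at hk
    rcases hk with h1 | ⟨_, c', hm, ha⟩ | ⟨hs, _⟩
    · exact absurd h1 hcr
    · refine ⟨c', hm, ⟨m, ha⟩, ?_⟩
      have h2 : Nat.find (⟨m, ha⟩ : ∃ k, AttrN τ k ((c', r, false, t) : V × V × Bool × Fin L)) ≤ m :=
        Nat.find_le ha
      omega
    · cases hs

lemma rob_step (τ : V → V → List Bool) {L : ℕ} {c r : V} {t : Fin L} (hcr : c ≠ r)
    (h : ∃ k, AttrN τ k ((c, r, false, t) : V × V × Bool × Fin L)) :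
    ∀ r', moveOK τ t.val r r' →
      ∃ h' : (∃ k, AttrN τ k ((c, r', true, nextT t) : V × V × Bool × Fin L)),
        Nat.find h' < Nat.find h := by
  intro r' hr
  have hk := Nat.find_spec h
  rcases hn : Nat.find h with _ | m
  · rw [hn] at hk; exact absurd hk hcr
  · rw [hn] at hk
    rcases hk with h1 | ⟨hs, _⟩ | ⟨_, ha⟩
    · exact absurd h1 hcr
    · cases hs
    · refine ⟨⟨m, ha r' hr⟩, ?_⟩
      have h2 : Nat.find (⟨m, ha r' hr⟩ : ∃ k, AttrN τ k ((c, r', true, nextT t) : V × V × Bool × Fin L)) ≤ m :=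
        Nat.find_le (ha r' hr)
      omega

lemma rob_step' (τ : V → V → List Bool) {L : ℕ} {c r : V} {t : Fin L} {k : ℕ}
    (hcr : c ≠ r) (hk : AttrN τ k ((c, r, false, t) : V × V × Bool × Fin L)) :
    ∀ r', moveOK τ t.val r r' →
      ∃ m < k, AttrN τ m ((c, r', true, nextT t) : V × V × Bool × Fin L) := by
  intro r' hr
  match k, hk with
  | 0, hk => exact absurd hk hcr
  | m + 1, hk =>
    rcases hk with h1 | ⟨hs, _⟩ | ⟨_, ha⟩
    · exact absurd h1 hcr
    · cases hs
    · exact ⟨m, Nat.lt_succ_self m, ha r' hr⟩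

/-- The cop's extracted positional strategy. -/
noncomputable def copStrat (τ : V → V → List Bool) (L : ℕ) (hLpos : 0 < L) : Strat V :=
  fun t c r =>
    if hcr : c = r then c
    else if h : ∃ k, AttrN τ k
        ((c, r, true, ⟨t % L, Nat.mod_lt _ hLpos⟩) : V × V × Bool × Fin L)
    then (cop_step τ hcr h).choose
    else c

lemma copStrat_stay (τ : V → V → List Bool) (L : ℕ) (hLpos : 0 < L) (t : ℕ) {c r : V}
    (hcr : c = r) : copStrat τ L hLpos t c r = c := by
  simp only [copStrat]
  rw [dif_pos hcr]

lemma copStrat_move (τ : V → V → List Bool) (L : ℕ) (hLpos : 0 < L) (t : ℕ) {c r : V}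
    (hcr : ¬ c = r)
    (h : ∃ k, AttrN τ k ((c, r, true, ⟨t % L, Nat.mod_lt _ hLpos⟩) : V × V × Bool × Fin L)) :
    copStrat τ L hLpos t c r = (cop_step τ hcr h).choose := by
  simp only [copStrat]
  rw [dif_neg hcr, dif_pos h]

lemma copStrat_valid [Fintype V] [DecidableEq V] (τ : V → V → List Bool) {L : ℕ}
    (hL : L = lcmLen τ) (hLpos : 0 < L) : copValid τ (copStrat τ L hLpos) := by
  intro t c r
  by_cases hcr : c = r
  · rw [copStrat_stay τ L hLpos t hcr]
    exact Or.inl rfl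
  · by_cases h : ∃ k, AttrN τ k
        ((c, r, true, ⟨t % L, Nat.mod_lt _ hLpos⟩) : V × V × Bool × Fin L)
    · rw [copStrat_move τ L hLpos t hcr h]
      have := (cop_step τ hcr h).choose_spec.1
      exact (moveOK_mod τ hL c _ t).mp this
    · have heq : copStrat τ L hLpos t c r = c := by
        simp only [copStrat]; rw [dif_neg hcr, dif_neg h]
      rw [heq]; exact Or.inl rfl

lemma nextT_mod {L : ℕ} (hLpos : 0 < L) (t : ℕ) :
    nextT (⟨t % L, Nat.mod_lt _ hLpos⟩ : Fin L) = ⟨(t + 1) % L, Nat.mod_lt _ hLpos⟩ := by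
  simp only [nextT]
  ext
  exact Nat.mod_add_mod t L 1

lemma copStrat_catches [Fintype V] [DecidableEq V] (τ : V → V → List Bool) {L : ℕ}
    (hL : L = lcmLen τ) (hLpos : 0 < L) (σr : Strat V) (hσr : robValid τ σr)
    (c0 r0 : V) : ∀ (N t : ℕ)
    (h : ∃ k, AttrN τ k
        (((pos (copStrat τ L hLpos) σr c0 r0 t).1,
          (pos (copStrat τ L hLpos) σr c0 r0 t).2, true,
          ⟨t % L, Nat.mod_lt _ hLpos⟩) : V × V × Bool × Fin L)),
    Nat.find h ≤ N →
    ∃ t', copStrat τ L hLpos t' (pos (copStrat τ L hLpos) σr c0 r0 t').1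
        (pos (copStrat τ L hLpos) σr c0 r0 t').2
      = (pos (copStrat τ L hLpos) σr c0 r0 t').2 := by
  intro N
  induction N with
  | zero =>
    intro t h hfind
    have h0 := Nat.find_spec h
    rw [Nat.le_zero.mp hfind] at h0
    exact ⟨t, by rw [copStrat_stay τ L hLpos t h0]; exact h0⟩
  | succ N ih =>
    intro t h hfind
    by_cases hcr : (pos (copStrat τ L hLpos) σr c0 r0 t).1
        = (pos (copStrat τ L hLpos) σr c0 r0 t).2
    · exact ⟨t, by rw [copStrat_stay τ L hLpos t hcr]; exact hcr⟩
    · have hmove := copStrat_move τ L hLpos t hcr h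
      obtain ⟨hm, h', hlt⟩ := (cop_step τ hcr h).choose_spec
      by_cases hc'r : (cop_step τ hcr h).choose
          = (pos (copStrat τ L hLpos) σr c0 r0 t).2
      · exact ⟨t, by rw [hmove]; exact hc'r⟩
      · have hk' := Nat.find_spec h'
        have hrmove : moveOK τ ((⟨t % L, Nat.mod_lt _ hLpos⟩ : Fin L)).val
            (pos (copStrat τ L hLpos) σr c0 r0 t).2
            (σr t (cop_step τ hcr h).choose (pos (copStrat τ L hLpos) σr c0 r0 t).2) :=
          (moveOK_mod τ hL _ _ t).mpr (hσr t _ _)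
        obtain ⟨m, hmlt, ham⟩ := rob_step' τ hc'r hk' _ hrmove
        rw [nextT_mod hLpos t] at ham
        have hpos : pos (copStrat τ L hLpos) σr c0 r0 (t + 1)
            = ((cop_step τ hcr h).choose,
               σr t (cop_step τ hcr h).choose (pos (copStrat τ L hLpos) σr c0 r0 t).2) := by
          simp only [pos]
          rw [hmove]
        have h2 : ∃ k, AttrN τ k
            (((pos (copStrat τ L hLpos) σr c0 r0 (t+1)).1,
              (pos (copStrat τ L hLpos) σr c0 r0 (t+1)).2, true,
              ⟨(t+1) % L, Nat.mod_lt _ hLpos⟩) : V × V × Bool × Fin L) := by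
          rw [hpos]; exact ⟨m, ham⟩
        refine ih (t + 1) h2 ?_
        have hfind2 : Nat.find h2 ≤ m := by
          apply Nat.find_le
          show AttrN τ m _
          rw [hpos]; exact ham
        omega

/-- The robber's extracted positional evasion strategy. -/
noncomputable def robStrat (τ : V → V → List Bool) (L : ℕ) (hLpos : 0 < L) : Strat V :=
  fun t c r =>
    if h : ∃ r', moveOK τ (t % L) r r' ∧
        ¬ Attr τ ((c, r', true, nextT ⟨t % L, Nat.mod_lt _ hLpos⟩) : V × V × Bool × Fin L)
    then h.choose else r

lemma robStrat_valid [Fintype V] [DecidableEq V] (τ : V → V → List Bool) {L : ℕ}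
    (hL : L = lcmLen τ) (hLpos : 0 < L) : robValid τ (robStrat τ L hLpos) := by
  intro t c r
  simp only [robStrat]
  split
  · next h => exact (moveOK_mod τ hL r _ t).mp h.choose_spec.1
  · exact Or.inl rfl

lemma robStrat_escapes [Fintype V] [DecidableEq V] (τ : V → V → List Bool) {L : ℕ}
    (hL : L = lcmLen τ) (hLpos : 0 < L) (c0 : V) (σc : Strat V) (hσc : copValid τ σc)
    (r0 : V)
    (hr0 : ¬ Attr τ ((c0, r0, true, (⟨0, hLpos⟩ : Fin L)) : V × V × Bool × Fin L)) :
    ¬ caught σc (robStrat τ L hLpos) c0 r0 := by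
  have hzero : (⟨0 % L, Nat.mod_lt _ hLpos⟩ : Fin L) = ⟨0, hLpos⟩ := by
    ext; exact Nat.zero_mod L
  -- invariant
  have hinv : ∀ t, ¬ Attr τ
      (((pos σc (robStrat τ L hLpos) c0 r0 t).1,
        (pos σc (robStrat τ L hLpos) c0 r0 t).2, true,
        ⟨t % L, Nat.mod_lt _ hLpos⟩) : V × V × Bool × Fin L) := by
    intro t
    induction t with
    | zero => rw [hzero]; exact hr0
    | succ t ih =>
      intro hA
      apply ih
      -- cop's move is legal at time `t % L`
      have hcm : moveOK τ (t % L)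
          (pos σc (robStrat τ L hLpos) c0 r0 t).1
          (σc t (pos σc (robStrat τ L hLpos) c0 r0 t).1
            (pos σc (robStrat τ L hLpos) c0 r0 t).2) :=
        (moveOK_mod τ hL _ _ t).mpr (hσc t _ _)
      refine Attr.copMove _ _ _ _ hcm ?_
      refine Attr.robMove _ _ _ fun r' hr' => ?_
      -- the robber's dite condition must fail, otherwise `hA` is contradicted
      set c' := σc t (pos σc (robStrat τ L hLpos) c0 r0 t).1
          (pos σc (robStrat τ L hLpos) c0 r0 t).2 with hc'
      set r := (pos σc (robStrat τ L hLpos) c0 r0 t).2 with hrr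
      by_cases h : ∃ rr, moveOK τ (t % L) r rr ∧
          ¬ Attr τ ((c', rr, true, nextT ⟨t % L, Nat.mod_lt _ hLpos⟩) : V × V × Bool × Fin L)
      · exfalso
        have hval : robStrat τ L hLpos t c' r = h.choose := by
          simp only [robStrat]; rw [dif_pos h]
        have hnext : ¬ Attr τ
            ((c', h.choose, true, nextT ⟨t % L, Nat.mod_lt _ hLpos⟩) : V × V × Bool × Fin L) :=
          h.choose_spec.2
        apply hnext
        have hpos : pos σc (robStrat τ L hLpos) c0 r0 (t + 1) = (c', h.choose) := by
          simp only [pos]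
          rw [← hc', ← hrr, hval]
        rw [hpos] at hA
        have e : ((c', h.choose, true, nextT ⟨t % L, Nat.mod_lt _ hLpos⟩) :
            V × V × Bool × Fin L)
            = (c', h.choose, true, ⟨(t+1) % L, Nat.mod_lt _ hLpos⟩) :=
          congrArg (fun x : Fin L => ((c', h.choose, true, x) : V × V × Bool × Fin L))
            (nextT_mod hLpos t)
        rw [e]
        exact hA
      · push_neg at h
        exact h r' hr'
  -- derive non-capture from the invariant
  have hne : ∀ t, σc t (pos σc (robStrat τ L hLpos) c0 r0 t).1
      (pos σc (robStrat τ L hLpos) c0 r0 t).2 ≠ (pos σc (robStrat τ L hLpos) c0 r0 t).2 := by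
    intro t hEq
    apply hinv t
    have hcm : moveOK τ (t % L)
        (pos σc (robStrat τ L hLpos) c0 r0 t).1
        (σc t (pos σc (robStrat τ L hLpos) c0 r0 t).1
          (pos σc (robStrat τ L hLpos) c0 r0 t).2) :=
      (moveOK_mod τ hL _ _ t).mpr (hσc t _ _)
    refine Attr.copMove _ _ _ _ hcm ?_
    rw [hEq]
    exact Attr.capture _ _ _
  rintro (hc | ⟨t, ht⟩)
  · exact hinv 0 (by rw [hzero]; subst hc; exact Attr.capture _ _ _)
  · exact hne t ht

end Aux

end EPG

open EPG in
/-- Cop-winning of an edge-periodic graph on `n` vertices with global period `L` reduces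
to AND-OR graph reachability on the configuration graph, which has exactly
`2·n²·L` vertices: the graph is cop-winning iff some cop start vertex `u_c` has all
configurations `(u_c, u_r, cop, 0)` in the attractor of the target set. -/
theorem stmt_18 {V : Type*} [Fintype V] [DecidableEq V] (τ : V → V → List Bool)
    (hsymm : ∀ u v, τ u v = τ v u)
    (hwf : ∀ u v, τ u v ≠ [] → true ∈ τ u v)
    (n L : ℕ) (hn : n = Fintype.card V) (hL : L = lcmLen τ) (hLpos : 0 < L) :
    Fintype.card (V × V × Bool × Fin L) = 2 * n ^ 2 * L ∧
      (copWinning τ ↔ ∃ uc : V, ∀ ur : V, Attr τ (uc, ur, true, ⟨0, hLpos⟩)) := by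
  classical
  constructor
  · rw [Fintype.card_prod, Fintype.card_prod, Fintype.card_prod, Fintype.card_bool,
      Fintype.card_fin, ← hn]
    ring
  · constructor
    · rintro ⟨c0, σc, hσc, hcatch⟩
      by_contra hno
      push_neg at hno
      obtain ⟨r0, hr0⟩ := hno c0
      exact robStrat_escapes τ hL hLpos c0 σc hσc r0 hr0
        (hcatch r0 (robStrat τ L hLpos) (robStrat_valid τ hL hLpos))
    · rintro ⟨uc, hattr⟩
      refine ⟨uc, copStrat τ L hLpos, copStrat_valid τ hL hLpos, ?_⟩
      intro r0 σr hσr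
      by_cases h0 : uc = r0
      · exact Or.inl h0
      · right
        have hzero : (⟨0 % L, Nat.mod_lt _ hLpos⟩ : Fin L) = ⟨0, hLpos⟩ := by
          ext; exact Nat.zero_mod L
        have h : ∃ k, AttrN τ k
            (((pos (copStrat τ L hLpos) σr uc r0 0).1,
              (pos (copStrat τ L hLpos) σr uc r0 0).2, true,
              ⟨0 % L, Nat.mod_lt _ hLpos⟩) : V × V × Bool × Fin L) := by
          rw [hzero]
          exact (attr_iff_attrN τ _).mp (hattr r0)
        exact copStrat_catches τ hL hLpos σr hσr uc r0 (Nat.find h) 0 h le_rfl
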